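/- arXiv:1712.02045 — 6 statements merged into one kernel-verified Lean document; each statement's English description precedes it below -/
import Mathlib

section
/- For every sub-hypergraph H of L, ΔγΔγ(H) = Δ(max(L) ∩ H), where max(L) denotes the set of maximal faces of L. Consequently, the operator ΔγΔγ is idempotent: (ΔγΔγ)²(H) = ΔγΔγ(H). -/
open Set

variable {V : Type*} [DecidableEq V]

/-- An abstract simplicial complex: simplices are nonempty finite sets,
closed under nonempty subsets. -/
def IsComplex (L : Set (Finset V)) : Prop :=
  (∀ σ ∈ L, σ.Nonempty) ∧ ∀ σ ∈ L, ∀ τ : Finset V, τ ⊆ σ → τ.Nonempty → τ ∈ L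

/-- ΔH : the minimal complex containing H (downward closure inside L). -/
def dUp (L H : Set (Finset V)) : Set (Finset V) :=
  {σ | σ ∈ L ∧ ∃ τ ∈ H, σ ⊆ τ}

/-- δH : the maximal complex contained in H. -/
def dDown (L H : Set (Finset V)) : Set (Finset V) :=
  {σ | σ ∈ L ∧ ∀ τ : Finset V, τ ⊆ σ → τ.Nonempty → τ ∈ H}

/-- γH : the complement hypergraph in L. -/
def gam (L H : Set (Finset V)) : Set (Finset V) := L \ H

/-- Ext = Δγδγ. -/
def ExtOp (L : Set (Finset V)) (H : Set (Finset V)) : Set (Finset V) :=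
  dUp L (gam L (dDown L (gam L H)))

/-- Int = δγΔγ. -/
def IntOp (L : Set (Finset V)) (H : Set (Finset V)) : Set (Finset V) :=
  dDown L (gam L (dUp L (gam L H)))

/-- The set of maximal faces of L. -/
def maxFaces (L : Set (Finset V)) : Set (Finset V) :=
  {σ | σ ∈ L ∧ ∀ τ ∈ L, σ ⊆ τ → σ = τ}

lemma exists_maxFace (L : Set (Finset V)) (hfin : L.Finite) {τ : Finset V} (hτ : τ ∈ L) :
    ∃ m ∈ maxFaces L, τ ⊆ m := by
  have hS : {ρ ∈ L | τ ⊆ ρ}.Finite := hfin.subset (by intro x hx; exact hx.1)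
  obtain ⟨m, hm, hmax⟩ := Set.Finite.exists_maximalFor Finset.card _ hS ⟨τ, hτ, subset_rfl⟩
  refine ⟨m, ⟨hm.1, ?_⟩, hm.2⟩
  intro ρ hρ hsub
  have : m.card = ρ.card := le_antisymm (Finset.card_le_card hsub) (hmax ⟨hρ, hm.2.trans hsub⟩ (Finset.card_le_card hsub))
  exact Finset.eq_of_subset_of_card_le hsub this.ge

lemma key (L : Set (Finset V)) (hfin : L.Finite)
    (H : Set (Finset V)) (hH : H ⊆ L) :
    dUp L (gam L (dUp L (gam L H))) = dUp L (maxFaces L ∩ H) := by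
  ext σ
  constructor
  · rintro ⟨hσ, τ, ⟨hτL, hτ⟩, hsub⟩
    obtain ⟨m, hm, hτm⟩ := exists_maxFace L hfin hτL
    refine ⟨hσ, m, ⟨hm, ?_⟩, hsub.trans hτm⟩
    by_contra hmH
    exact hτ ⟨hτL, m, ⟨hm.1, hmH⟩, hτm⟩
  · rintro ⟨hσ, τ, ⟨hmax, hτH⟩, hsub⟩
    refine ⟨hσ, τ, ⟨hmax.1, ?_⟩, hsub⟩
    rintro ⟨-, ρ, ⟨hρL, hρH⟩, hτρ⟩
    exact hρH (hmax.2 ρ hρL hτρ ▸ hτH)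

theorem dUp_gam_dUp_gam (L : Set (Finset V)) (hfin : L.Finite) (hL : IsComplex L)
    (H : Set (Finset V)) (hH : H ⊆ L) :
    dUp L (gam L (dUp L (gam L H))) = dUp L (maxFaces L ∩ H) ∧
      dUp L (gam L (dUp L (gam L (dUp L (gam L (dUp L (gam L H))))))) =
        dUp L (gam L (dUp L (gam L H))) := by
  have h1 := key L hfin H hH
  refine ⟨h1, ?_⟩
  have h2 := key L hfin (dUp L (gam L (dUp L (gam L H)))) (fun x hx => hx.1)
  rw [h2, h1]
  ext σ
  constructor
  · rintro ⟨hσL, τ, ⟨hτmax, hτL, ρ, ⟨hρmax, hρH⟩, hτρ⟩, hστ⟩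
    exact ⟨hσL, τ, ⟨hτmax, by rw [hτmax.2 ρ hρmax.1 hτρ]; exact hρH⟩, hστ⟩
  · rintro ⟨hσL, τ, hτ, hστ⟩
    exact ⟨hσL, τ, ⟨hτ.1, hτ.1.1, τ, hτ, subset_rfl⟩, hστ⟩
end

section
/- Suppose the diameter of L is n. If H is a nonempty sub-hypergraph of L and k ≥ n, then Ext^k(H) = L. -/
open Set

variable {V : Type*} [DecidableEq V]

/-- A path in L: a nonempty sequence of simplices of L in which
consecutive simplices intersect. -/
def IsPath (L : Set (Finset V)) (s : List (Finset V)) : Prop :=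
  s ≠ [] ∧ (∀ σ ∈ s, σ ∈ L) ∧ s.Chain' (fun a b => (a ∩ b).Nonempty)

/-- The distance between two simplices: the minimal length of a path
from σ to σ'. -/
noncomputable def pathDist (L : Set (Finset V)) (σ σ' : Finset V) : ℕ :=
  sInf {m | ∃ s : List (Finset V),
    IsPath L s ∧ s.head? = some σ ∧ s.getLast? = some σ' ∧ s.length = m}

/-- The diameter of L. -/
noncomputable def diam (L : Set (Finset V)) : ℕ :=
  sSup {m | ∃ σ ∈ L, ∃ σ' ∈ L, pathDist L σ σ' = m}

/-- L is connected: any two simplices are joined by a path. -/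
def IsConn (L : Set (Finset V)) : Prop :=
  ∀ σ ∈ L, ∀ σ' ∈ L, ∃ s : List (Finset V),
    IsPath L s ∧ s.head? = some σ ∧ s.getLast? = some σ'

lemma extOp_subset (L K : Set (Finset V)) : ExtOp L K ⊆ L := fun _ h => h.1

lemma subset_extOp (L K : Set (Finset V)) (hL : IsComplex L) (hK : K ⊆ L) :
    K ⊆ ExtOp L K := by
  intro σ hσ
  have hσL : σ ∈ L := hK hσ
  refine ⟨hσL, σ, ⟨hσL, fun hd => ?_⟩, subset_rfl⟩
  exact (hd.2 σ subset_rfl (hL.1 σ hσL)).2 hσ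

lemma extOp_downclosed (L K : Set (Finset V)) (hL : IsComplex L) :
    ∀ σ ∈ ExtOp L K, ∀ τ : Finset V, τ ⊆ σ → τ.Nonempty → τ ∈ ExtOp L K := by
  rintro σ ⟨hσL, ρ, hρ, hσρ⟩ τ hτσ hτne
  exact ⟨hL.2 σ hσL τ hτσ hτne, ρ, hρ, hτσ.trans hσρ⟩

lemma mem_extOp_of_inter (L K : Set (Finset V)) (hL : IsComplex L)
    (hdc : ∀ σ ∈ K, ∀ τ : Finset V, τ ⊆ σ → τ.Nonempty → τ ∈ K)
    {σ τ : Finset V} (hσ : σ ∈ L) (hτ : τ ∈ K) (hint : (σ ∩ τ).Nonempty) :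
    σ ∈ ExtOp L K := by
  have h1 : σ ∩ τ ∈ K := hdc τ hτ _ Finset.inter_subset_right hint
  refine ⟨hσ, σ, ⟨hσ, fun hd => ?_⟩, subset_rfl⟩
  exact (hd.2 (σ ∩ τ) Finset.inter_subset_left hint).2 h1

lemma iterate_subset (L H : Set (Finset V)) (hH : H ⊆ L) (j : ℕ) :
    (ExtOp L)^[j] H ⊆ L := by
  induction j with
  | zero => simpa using hH
  | succ m ih =>
      rw [Function.iterate_succ_apply']
      exact extOp_subset L _

lemma iterate_mono (L H : Set (Finset V)) (hL : IsComplex L) (hH : H ⊆ L)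
    {d k : ℕ} (hdk : d ≤ k) : (ExtOp L)^[d] H ⊆ (ExtOp L)^[k] H := by
  induction k with
  | zero => simpa [Nat.le_zero.mp hdk]
  | succ m ih =>
      rcases Nat.lt_or_ge d (m+1) with h | h
      · have := ih (Nat.lt_succ_iff.mp h)
        rw [Function.iterate_succ_apply']
        exact this.trans (subset_extOp L _ hL (iterate_subset L H hH m))
      · have : d = m + 1 := le_antisymm hdk h
        simp [this]

lemma path_mem_iterate (L H : Set (Finset V)) (hL : IsComplex L) (hH : H ⊆ L) :
    ∀ s : List (Finset V), ∀ σ τ : Finset V, IsPath L s → s.head? = some σ →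
    s.getLast? = some τ → τ ∈ H → σ ∈ (ExtOp L)^[s.length] H := by
  intro s
  induction s with
  | nil => intro σ τ hp; exact absurd rfl hp.1
  | cons a rest ih =>
      intro σ τ hp hhead hlast hτ
      have ha : σ = a := by simpa using hhead.symm
      subst ha
      cases rest with
      | nil =>
          have : τ = σ := by simpa using hlast.symm
          subst this
          simpa [Function.iterate_succ_apply'] using
            subset_extOp L H hL hH hτ
      | cons b t =>
          have hchain : List.IsChain (fun a b => (a ∩ b).Nonempty) (σ :: b :: t) := hp.2.2
          rw [List.isChain_cons_cons] at hchain
          have hpt : IsPath L (b :: t) :=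
            ⟨by simp, fun x hx => hp.2.1 x (List.mem_cons_of_mem _ hx), hchain.2⟩
          have hlast' : (b :: t).getLast? = some τ := by
            simpa [List.getLast?_cons_cons] using hlast
          have hb : b ∈ (ExtOp L)^[(b :: t).length] H :=
            ih b τ hpt rfl hlast' hτ
          have hlen : (σ :: b :: t).length = (b :: t).length + 1 := rfl
          rw [hlen, Function.iterate_succ_apply']
          have hK : (ExtOp L)^[(b :: t).length] H = ExtOp L ((ExtOp L)^[t.length + 1 - 1] H) := by
            simp [Function.iterate_succ_apply']
          refine mem_extOp_of_inter L _ hL ?_ (hp.2.1 σ (by simp)) hb hchain.1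
          rw [hK]
          exact extOp_downclosed L _ hL

theorem ext_iterate_eq_top (L : Set (Finset V)) (hfin : L.Finite) (hL : IsComplex L)
    (hconn : IsConn L) (n : ℕ) (hdiam : diam L = n)
    (H : Set (Finset V)) (hH : H ⊆ L) (hne : H.Nonempty)
    (k : ℕ) (hk : n ≤ k) :
    (ExtOp L)^[k] H = L := by
  apply Set.Subset.antisymm (iterate_subset L H hH k)
  intro σ hσ
  obtain ⟨τ₀, hτ₀⟩ := hne
  have hτ₀L : τ₀ ∈ L := hH hτ₀
  -- the set of path lengths from σ to τ₀ is nonempty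
  obtain ⟨s, hs, hh, hl⟩ := hconn σ hσ τ₀ hτ₀L
  have hSne : {m | ∃ s : List (Finset V),
      IsPath L s ∧ s.head? = some σ ∧ s.getLast? = some τ₀ ∧ s.length = m}.Nonempty :=
    ⟨s.length, s, hs, hh, hl, rfl⟩
  have hmem := Nat.sInf_mem hSne
  obtain ⟨s', hs', hh', hl', hlen'⟩ := hmem
  -- pathDist σ τ₀ ≤ diam L = n
  have hfinS : {m | ∃ x ∈ L, ∃ y ∈ L, pathDist L x y = m}.Finite := by
    have : {m | ∃ x ∈ L, ∃ y ∈ L, pathDist L x y = m} = Set.image2 (pathDist L) L L := by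
      ext m; simp [Set.mem_image2]
    rw [this]
    exact Set.Finite.image2 _ hfin hfin
  have hdle : pathDist L σ τ₀ ≤ n := by
    rw [← hdiam]
    exact le_csSup hfinS.bddAbove ⟨σ, hσ, τ₀, hτ₀L, rfl⟩
  have hmem' : σ ∈ (ExtOp L)^[s'.length] H :=
    path_mem_iterate L H hL hH s' σ τ₀ hs' hh' hl' hτ₀
  have : s'.length ≤ k := by rw [hlen']; exact le_trans hdle hk
  exact iterate_mono L H hL hH this hmem'
end

section
/- Suppose the diameter of L is n. If H is a sub-hypergraph of L with H ≠ L and k ≥ n, then Int^k(H) = ∅. -/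
open Set

variable {V : Type*} [DecidableEq V]

lemma mem_IntOp_adj {L H : Set (Finset V)} {σ : Finset V} (h : σ ∈ IntOp L H) :
    σ ∈ L ∧ ∀ ρ ∈ L, (ρ ∩ σ).Nonempty → ρ ∈ H := by
  obtain ⟨hσL, hτ⟩ := h
  refine ⟨hσL, fun ρ hρ hne => ?_⟩
  have h1 := hτ (ρ ∩ σ) Finset.inter_subset_right hne
  by_contra hρH
  exact h1.2 ⟨h1.1, ρ, ⟨hρ, hρH⟩, Finset.inter_subset_left⟩

lemma key_s11 (L : Set (Finset V)) (hL : IsComplex L) :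
    ∀ (k : ℕ) (H : Set (Finset V)), H ⊆ L →
    ∀ σ ∈ (IntOp L)^[k] H, ∀ s : List (Finset V), IsPath L s →
      s.head? = some σ → s.length ≤ k + 1 → ∀ x, s.getLast? = some x → x ∈ H := by
  intro k
  induction k with
  | zero =>
    intro H hH σ hσ s hs hhead hlen x hlast
    match s, hs.1 with
    | [a], _ =>
      have h1 : a = σ := by simpa using hhead
      have h2 : a = x := by simpa using hlast
      subst h1; subst h2
      simpa using hσ
    | a :: b :: t, _ => simp at hlen
  | succ k ih =>
    intro H hH σ hσ s hs hhead hlen x hlast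
    rw [Function.iterate_succ_apply'] at hσ
    obtain ⟨hσL, hadj⟩ := mem_IntOp_adj hσ
    match s, hs.1 with
    | [a], _ =>
      have h1 : a = σ := by simpa using hhead
      have h2 : a = x := by simpa using hlast
      subst h1; subst h2
      have hσne : a.Nonempty := hL.1 a hσL
      have hmem : a ∈ (IntOp L)^[k] H := hadj a hσL (by simpa using hσne)
      exact ih H hH a hmem [a] hs rfl (by simp) a (by simp)
    | a :: b :: t, _ =>
      have h1 : a = σ := by simpa using hhead
      subst h1
      obtain ⟨hab, hchain⟩ := List.isChain_cons_cons.mp hs.2.2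
      have hbL : b ∈ L := hs.2.1 b (by simp)
      have hbmem : b ∈ (IntOp L)^[k] H :=
        hadj b hbL (by rwa [Finset.inter_comm])
      have hpath : IsPath L (b :: t) :=
        ⟨by simp, fun τ hτ => hs.2.1 τ (by simp at hτ ⊢; tauto), hchain⟩
      have hlast' : (b :: t).getLast? = some x := by
        rwa [List.getLast?_cons_cons] at hlast
      have hlen' : (b :: t).length ≤ k + 1 := by
        simp only [List.length_cons] at hlen ⊢; omega
      exact ih H hH b hbmem (b :: t) hpath rfl hlen' x hlast'
theorem int_iterate_eq_empty (L : Set (Finset V)) (hfin : L.Finite) (hL : IsComplex L)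
    (hconn : IsConn L) (n : ℕ) (hdiam : diam L = n)
    (H : Set (Finset V)) (hH : H ⊆ L) (hne : H ≠ L)
    (k : ℕ) (hk : n ≤ k) :
    (IntOp L)^[k] H = ∅ := by
  by_contra hcon
  obtain ⟨σ, hσ⟩ := Set.nonempty_iff_ne_empty.mpr hcon
  -- Int^[k] H ⊆ L
  have hsub : (IntOp L)^[k] H ⊆ L := by
    cases k with
    | zero => simpa using hH
    | succ m => rw [Function.iterate_succ_apply']; exact fun τ h => h.1
  have hσL : σ ∈ L := hsub hσ
  -- pick ρ₀ ∈ L \ H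
  obtain ⟨ρ₀, hρ₀L, hρ₀H⟩ : ∃ ρ₀ ∈ L, ρ₀ ∉ H := by
    by_contra hc
    push_neg at hc
    exact hne (Set.Subset.antisymm hH hc)
  -- the distance set is nonempty
  set T : Set ℕ := {m | ∃ s : List (Finset V),
    IsPath L s ∧ s.head? = some σ ∧ s.getLast? = some ρ₀ ∧ s.length = m} with hT
  have hTne : T.Nonempty := by
    obtain ⟨s, hs, hh, hl⟩ := hconn σ hσL ρ₀ hρ₀L
    exact ⟨s.length, s, hs, hh, hl, rfl⟩
  obtain ⟨s, hs, hh, hl, hlen⟩ : pathDist L σ ρ₀ ∈ T := Nat.sInf_mem hTne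
  -- diameter bound
  have hS : pathDist L σ ρ₀ ≤ n := by
    rw [← hdiam]
    apply le_csSup
    · have : {m | ∃ σ ∈ L, ∃ σ' ∈ L, pathDist L σ σ' = m} ⊆
        (fun p : Finset V × Finset V => pathDist L p.1 p.2) '' (L ×ˢ L) := by
        rintro m ⟨a, ha, b, hb, rfl⟩
        exact ⟨(a, b), ⟨ha, hb⟩, rfl⟩
      exact (((hfin.prod hfin).image _).subset this).bddAbove
    · exact ⟨σ, hσL, ρ₀, hρ₀L, rfl⟩
  have : ρ₀ ∈ H :=
    key_s11 L hL k H hH σ hσ s hs hh (by omega) ρ₀ hl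
  exact hρ₀H this
end

section
/- For every sub-hypergraph H of L and every integer k ≥ 1, Ext^{k-1}(γH) ⊆ γ(Int^k(H)) ⊆ Ext^{k+1}(γH). -/
open Set

variable {V : Type*} [DecidableEq V]

/-! ### Auxiliary operators and lemmas -/

/-- A = Δ. -/
def AOp (L X : Set (Finset V)) : Set (Finset V) := dUp L X

/-- B = γδγ. -/
def BOp (L X : Set (Finset V)) : Set (Finset V) := gam L (dDown L (gam L X))

variable {L X Y : Set (Finset V)}

lemma gam_sub : gam L X ⊆ L := fun _ h => h.1

lemma AOp_sub : AOp L X ⊆ L := fun _ h => h.1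

lemma BOp_sub : BOp L X ⊆ L := fun _ h => h.1

lemma gam_antitone (h : X ⊆ Y) : gam L Y ⊆ gam L X :=
  fun σ hσ => ⟨hσ.1, fun hx => hσ.2 (h hx)⟩

lemma dUp_mono (h : X ⊆ Y) : dUp L X ⊆ dUp L Y := by
  rintro σ ⟨hσL, τ, hτ, hst⟩
  exact ⟨hσL, τ, h hτ, hst⟩

lemma dDown_mono (h : X ⊆ Y) : dDown L X ⊆ dDown L Y := by
  rintro σ ⟨hσL, hall⟩
  exact ⟨hσL, fun τ hts htne => h (hall τ hts htne)⟩

lemma AOp_mono (h : X ⊆ Y) : AOp L X ⊆ AOp L Y := dUp_mono h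

lemma BOp_mono (h : X ⊆ Y) : BOp L X ⊆ BOp L Y :=
  gam_antitone (dDown_mono (gam_antitone h))

lemma AOp_infl (h : X ⊆ L) : X ⊆ AOp L X :=
  fun σ hσ => ⟨h hσ, σ, hσ, subset_rfl⟩

lemma BOp_infl (hL : IsComplex L) (h : X ⊆ L) : X ⊆ BOp L X := by
  intro σ hσ
  refine ⟨h hσ, fun hσd => ?_⟩
  exact (hσd.2 σ subset_rfl (hL.1 σ (h hσ))).2 hσ

lemma gam_gam (h : X ⊆ L) : gam L (gam L X) = X := by
  ext σ
  constructor
  · rintro ⟨hσL, hσg⟩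
    by_contra hx
    exact hσg ⟨hσL, hx⟩
  · intro hx
    exact ⟨h hx, fun hg => hg.2 hx⟩

lemma dUp_idem : dUp L (dUp L X) = dUp L X := by
  ext σ
  constructor
  · rintro ⟨hσL, τ, ⟨hτL, ρ, hρ, htr⟩, hst⟩
    exact ⟨hσL, ρ, hρ, hst.trans htr⟩
  · intro h
    exact AOp_infl AOp_sub h

lemma dDown_idem (hL : IsComplex L) : dDown L (dDown L X) = dDown L X := by
  ext σ
  constructor
  · rintro ⟨hσL, hall⟩
    exact ⟨hσL, fun τ hts htne => (hall τ hts htne).2 τ subset_rfl htne⟩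
  · rintro ⟨hσL, hall⟩
    refine ⟨hσL, fun τ hts htne => ?_⟩
    exact ⟨hL.2 σ hσL τ hts htne, fun ρ hrt hrne => hall ρ (hrt.trans hts) hrne⟩

lemma AOp_idem : AOp L (AOp L X) = AOp L X := dUp_idem

lemma BOp_idem (hL : IsComplex L) : BOp L (BOp L X) = BOp L X := by
  unfold BOp
  rw [gam_gam (fun _ h => h.1), dDown_idem hL]

lemma ExtOp_eq : ExtOp L X = AOp L (BOp L X) := rfl

lemma gam_IntOp : gam L (IntOp L X) = BOp L (AOp L (gam L X)) := rfl

lemma gam_IntOp_iter (H : Set (Finset V)) :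
    ∀ k : ℕ, gam L ((IntOp L)^[k] H) = (fun X => BOp L (AOp L X))^[k] (gam L H) := by
  intro k
  induction k with
  | zero => rfl
  | succ n ih =>
      rw [Function.iterate_succ_apply', Function.iterate_succ_apply', gam_IntOp, ih]

lemma left_incl (hL : IsComplex L) :
    ∀ k : ℕ, ∀ X : Set (Finset V), X ⊆ L →
      (fun X => AOp L (BOp L X))^[k] X ⊆ (fun X => BOp L (AOp L X))^[k + 1] X := by
  intro k
  induction k with
  | zero =>
      intro X hX
      simpa using (AOp_infl hX).trans (BOp_infl hL AOp_sub)
  | succ n ih =>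
      intro X hX
      rw [Function.iterate_succ_apply' (fun X => AOp L (BOp L X))]
      rw [Function.iterate_succ_apply' (fun X => BOp L (AOp L X)) (n + 1)]
      have h1 : AOp L (BOp L ((fun X => AOp L (BOp L X))^[n] X)) ⊆
          AOp L (BOp L ((fun X => BOp L (AOp L X))^[n + 1] X)) :=
        AOp_mono (BOp_mono (ih X hX))
      have h2 : BOp L ((fun X => BOp L (AOp L X))^[n + 1] X) =
          (fun X => BOp L (AOp L X))^[n + 1] X := by
        rw [Function.iterate_succ_apply' (fun X => BOp L (AOp L X))]
        exact BOp_idem hL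
      refine h1.trans ?_
      rw [h2]
      exact BOp_infl hL AOp_sub

lemma right_incl (hL : IsComplex L) :
    ∀ k : ℕ, ∀ X : Set (Finset V), X ⊆ L →
      (fun X => BOp L (AOp L X))^[k] X ⊆ (fun X => AOp L (BOp L X))^[k + 1] X := by
  intro k
  induction k with
  | zero =>
      intro X hX
      simpa using (BOp_infl hL hX).trans (AOp_infl BOp_sub)
  | succ n ih =>
      intro X hX
      rw [Function.iterate_succ_apply' (fun X => BOp L (AOp L X))]
      rw [Function.iterate_succ_apply' (fun X => AOp L (BOp L X)) (n + 1)]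
      have h1 : BOp L (AOp L ((fun X => BOp L (AOp L X))^[n] X)) ⊆
          BOp L (AOp L ((fun X => AOp L (BOp L X))^[n + 1] X)) :=
        BOp_mono (AOp_mono (ih X hX))
      have h2 : AOp L ((fun X => AOp L (BOp L X))^[n + 1] X) =
          (fun X => AOp L (BOp L X))^[n + 1] X := by
        rw [Function.iterate_succ_apply' (fun X => AOp L (BOp L X))]
        exact AOp_idem
      refine h1.trans ?_
      rw [h2]
      exact AOp_infl BOp_sub

lemma ExtOp_iter (G : Set (Finset V)) :
    ∀ k : ℕ, (ExtOp L)^[k] G = (fun X => AOp L (BOp L X))^[k] G := by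
  intro k
  induction k with
  | zero => rfl
  | succ n ih =>
      rw [Function.iterate_succ_apply', Function.iterate_succ_apply', ih]
      rfl

theorem ext_int_sandwich (L : Set (Finset V)) (hfin : L.Finite) (hL : IsComplex L)
    (H : Set (Finset V)) (hH : H ⊆ L) (k : ℕ) (hk : 1 ≤ k) :
    (ExtOp L)^[k - 1] (gam L H) ⊆ gam L ((IntOp L)^[k] H) ∧
      gam L ((IntOp L)^[k] H) ⊆ (ExtOp L)^[k + 1] (gam L H) := by
  obtain ⟨m, rfl⟩ : ∃ m, k = m + 1 := ⟨k - 1, (Nat.succ_pred_eq_of_pos hk).symm⟩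
  have hg : gam L H ⊆ L := gam_sub
  rw [gam_IntOp_iter, ExtOp_iter, ExtOp_iter]
  constructor
  · simpa using left_incl hL m (gam L H) hg
  · simpa using right_incl hL (m + 1) (gam L H) hg
end

section
/- Let r be the smallest integer with Ext^r(γH) = L and t the smallest integer with Int^t(H) = ∅. Then t ∈ {r−1, r, r+1}. -/
open Set

variable {V : Type*} [DecidableEq V]

section Aux

set_option linter.unusedSectionVars false

/-- Auxiliary: σ ∈ eOp L K iff σ shares a common coface (in L) with some member of K. -/
def eOp (L : Set (Finset V)) (K : Set (Finset V)) : Set (Finset V) :=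
  {σ | σ ∈ L ∧ ∃ τ ∈ L, σ ⊆ τ ∧ ∃ ρ : Finset V, ρ ⊆ τ ∧ ρ.Nonempty ∧ ρ ∈ K}

/-- Auxiliary: the star of A in L (simplices of L meeting some member of A). -/
def starOp (L : Set (Finset V)) (A : Set (Finset V)) : Set (Finset V) :=
  {σ | σ ∈ L ∧ ∃ τ ∈ A, (σ ∩ τ).Nonempty}

lemma eOp_subset_L (L A : Set (Finset V)) : eOp L A ⊆ L := fun _ h => h.1

lemma starOp_subset_L (L A : Set (Finset V)) : starOp L A ⊆ L := fun _ h => h.1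

lemma intOp_subset_L (L A : Set (Finset V)) : IntOp L A ⊆ L := fun _ h => h.1

lemma ext_eq_eOp (L : Set (Finset V)) (hL : IsComplex L) : ExtOp L = eOp L := by
  funext K
  ext σ
  constructor
  · rintro ⟨hσ, τ, ⟨hτL, hτ⟩, hστ⟩
    refine ⟨hσ, τ, hτL, hστ, ?_⟩
    by_contra hcon
    push_neg at hcon
    exact hτ ⟨hτL, fun ρ hρτ hρne => ⟨hL.2 τ hτL ρ hρτ hρne, hcon ρ hρτ hρne⟩⟩
  · rintro ⟨hσ, τ, hτL, hστ, ρ, hρτ, hρne, hρK⟩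
    exact ⟨hσ, τ, ⟨hτL, fun hd => (hd.2 ρ hρτ hρne).2 hρK⟩, hστ⟩

lemma int_eq_star (L : Set (Finset V)) (hL : IsComplex L) (H : Set (Finset V)) :
    IntOp L H = L \ starOp L (gam L H) := by
  ext σ
  constructor
  · rintro ⟨hσ, hall⟩
    refine ⟨hσ, fun hst => ?_⟩
    obtain ⟨_, τ, hτ, hint⟩ := hst
    exact (hall (σ ∩ τ) Finset.inter_subset_left hint).2
      ⟨(hall (σ ∩ τ) Finset.inter_subset_left hint).1, τ, hτ, Finset.inter_subset_right⟩
  · rintro ⟨hσL, hnst⟩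
    refine ⟨hσL, fun ρ hρσ hρne => ⟨hL.2 σ hσL ρ hρσ hρne, fun hup => ?_⟩⟩
    obtain ⟨hρL, τ, hτgam, hρτ⟩ := hup
    exact hnst ⟨hσL, τ, hτgam, hρne.mono (Finset.subset_inter hρσ hρτ)⟩

lemma gam_int_iter (L : Set (Finset V)) (hL : IsComplex L) (H : Set (Finset V)) (j : ℕ) :
    gam L ((IntOp L)^[j] H) = (starOp L)^[j] (gam L H) := by
  induction j with
  | zero => rfl
  | succ n ih =>
      rw [Function.iterate_succ_apply', Function.iterate_succ_apply', ← ih,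
        int_eq_star L hL]
      show L \ (L \ starOp L _) = _
      rw [diff_diff_cancel_left (starOp_subset_L L _)]

lemma eOp_mono (L : Set (Finset V)) {A B : Set (Finset V)} (h : A ⊆ B) :
    eOp L A ⊆ eOp L B := by
  rintro σ ⟨hσ, τ, hτ, hστ, ρ, h1, h2, h3⟩
  exact ⟨hσ, τ, hτ, hστ, ρ, h1, h2, h h3⟩

lemma starOp_mono (L : Set (Finset V)) {A B : Set (Finset V)} (h : A ⊆ B) :
    starOp L A ⊆ starOp L B := by
  rintro σ ⟨hσ, τ, hτ, hint⟩
  exact ⟨hσ, τ, h hτ, hint⟩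

lemma subset_eOp (L : Set (Finset V)) (hL : IsComplex L) {A : Set (Finset V)} (hA : A ⊆ L) :
    A ⊆ eOp L A := fun σ hσ =>
  ⟨hA hσ, σ, hA hσ, subset_rfl, σ, subset_rfl, hL.1 σ (hA hσ), hσ⟩

lemma subset_starOp (L : Set (Finset V)) (hL : IsComplex L) {A : Set (Finset V)} (hA : A ⊆ L) :
    A ⊆ starOp L A := fun σ hσ =>
  ⟨hA hσ, σ, hσ, by simpa using hL.1 σ (hA hσ)⟩

/-- eOp applied to a star is inside the double star. -/
lemma eOp_starOp_subset (L : Set (Finset V)) (hL : IsComplex L) (A : Set (Finset V)) :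
    eOp L (starOp L A) ⊆ starOp L (starOp L A) := by
  rintro σ ⟨hσ, τ, hτL, hστ, ρ, hρτ, hρne, hρL, μ, hμ, hint⟩
  refine ⟨hσ, τ, ⟨hτL, μ, hμ, hint.mono (Finset.inter_subset_inter hρτ subset_rfl)⟩, ?_⟩
  simpa [Finset.inter_eq_left.2 hστ] using hL.1 σ hσ

/-- star applied to an eOp is inside the double eOp. -/
lemma starOp_eOp_subset (L : Set (Finset V)) (hL : IsComplex L) (A : Set (Finset V)) :
    starOp L (eOp L A) ⊆ eOp L (eOp L A) := by
  rintro σ ⟨hσ, τ, ⟨hτL, τ', hτ'L, hττ', ρ, hρ1, hρ2, hρ3⟩, hint⟩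
  obtain ⟨v, hv⟩ := hint
  have hvσ : {v} ⊆ σ := Finset.singleton_subset_iff.2 (Finset.mem_inter.1 hv).1
  have hvτ : {v} ⊆ τ := Finset.singleton_subset_iff.2 (Finset.mem_inter.1 hv).2
  refine ⟨hσ, σ, hσ, subset_rfl, {v}, hvσ, Finset.singleton_nonempty v, ?_⟩
  exact ⟨hL.2 τ hτL {v} hvτ (Finset.singleton_nonempty v), τ', hτ'L,
    hvτ.trans hττ', ρ, hρ1, hρ2, hρ3⟩

lemma eOp_iter_subset_star (L : Set (Finset V)) (hL : IsComplex L)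
    {K : Set (Finset V)} (hK : K ⊆ L) (j : ℕ) :
    (eOp L)^[j] K ⊆ (starOp L)^[j + 1] K := by
  induction j with
  | zero => simpa using subset_starOp L hL hK
  | succ n ih =>
      rw [Function.iterate_succ_apply', Function.iterate_succ_apply']
      calc eOp L ((eOp L)^[n] K) ⊆ eOp L ((starOp L)^[n+1] K) := eOp_mono L ih
        _ ⊆ starOp L ((starOp L)^[n+1] K) := by
            rw [Function.iterate_succ_apply']
            exact eOp_starOp_subset L hL _

lemma starOp_iter_subset_eOp (L : Set (Finset V)) (hL : IsComplex L)
    {K : Set (Finset V)} (hK : K ⊆ L) (j : ℕ) :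
    (starOp L)^[j] K ⊆ (eOp L)^[j + 1] K := by
  induction j with
  | zero => simpa using subset_eOp L hL hK
  | succ n ih =>
      rw [Function.iterate_succ_apply', Function.iterate_succ_apply']
      calc starOp L ((starOp L)^[n] K) ⊆ starOp L ((eOp L)^[n+1] K) := starOp_mono L ih
        _ ⊆ eOp L ((eOp L)^[n+1] K) := by
            rw [Function.iterate_succ_apply']
            exact starOp_eOp_subset L hL _

end Aux

theorem int_ext_vanishing_times (L : Set (Finset V)) (hfin : L.Finite) (hL : IsComplex L)
    (hconn : IsConn L) (H : Set (Finset V)) (hH : H ⊆ L)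
    (hne : H ≠ L) (hne' : gam L H ≠ ∅)
    (r t : ℕ)
    (hr : (ExtOp L)^[r] (gam L H) = L ∧ ∀ j < r, (ExtOp L)^[j] (gam L H) ≠ L)
    (ht : (IntOp L)^[t] H = ∅ ∧ ∀ j < t, (IntOp L)^[j] H ≠ ∅) :
    t = r - 1 ∨ t = r ∨ t = r + 1 := by
  set K := gam L H with hK
  have hKL : K ⊆ L := diff_subset
  have hEeq : ExtOp L = eOp L := ext_eq_eOp L hL
  -- t ≤ r + 1
  have htle : t ≤ r + 1 := by
    have h1 : (eOp L)^[r] K = L := by rw [← hEeq]; exact hr.1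
    have h2 : (starOp L)^[r + 1] K = L := by
      refine subset_antisymm ?_ ?_
      · rw [Function.iterate_succ_apply']
        exact starOp_subset_L L _
      · have hst := eOp_iter_subset_star L hL hKL r
        rw [h1] at hst
        exact hst
    have h3 : (IntOp L)^[r + 1] H = ∅ := by
      have hgam := gam_int_iter L hL H (r + 1)
      rw [h2] at hgam
      have hsub : (IntOp L)^[r + 1] H ⊆ L := by
        rw [Function.iterate_succ_apply']
        exact intOp_subset_L L _
      refine subset_empty_iff.1 (fun σ hσ => ?_)
      have hmem : σ ∈ gam L ((IntOp L)^[r + 1] H) := by rw [hgam]; exact hsub hσ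
      exact absurd hσ hmem.2
    by_contra hcon
    exact ht.2 (r + 1) (by omega) h3
  -- r ≤ t + 1
  have hrle : r ≤ t + 1 := by
    have h1 : (starOp L)^[t] K = L := by
      have := gam_int_iter L hL H t
      rw [ht.1] at this
      rw [← this]
      show gam L ∅ = L
      simp [gam]
    have h2 : (eOp L)^[t + 1] K = L := by
      refine subset_antisymm ?_ ?_
      · rw [Function.iterate_succ_apply']
        exact eOp_subset_L L _
      · have hst := starOp_iter_subset_eOp L hL hKL t
        rw [h1] at hst
        exact hst
    have h3 : (ExtOp L)^[t + 1] K = L := by rw [hEeq]; exact h2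
    by_contra hcon
    exact hr.2 (t + 1) (by omega) h3
  omega
end

section
/- For every sub-hypergraph H of L, Ext(H) ⊆ Nbd(H); and if every vertex of a hyperedge of H is itself a hyperedge of H (i.e., {v} ∈ H for all v ∈ ∪H), then Ext(H) = Nbd(H). -/
open Set

variable {V : Type*} [DecidableEq V]

/-- The neighborhood of a simplex τ in L. -/
def Nbd (L : Set (Finset V)) (τ : Finset V) : Set (Finset V) :=
  dUp L {σ | σ ∈ L ∧ (σ ∩ τ).Nonempty}

/-- The neighborhood of a hypergraph H in L. -/
def NbdH (L H : Set (Finset V)) : Set (Finset V) := ⋃ τ ∈ H, Nbd L τ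

/-- Nbd⁻¹(H) : the union of all sub-hypergraphs of L whose
neighborhood is contained in H. -/
def NbdInv (L H : Set (Finset V)) : Set (Finset V) :=
  ⋃₀ {H' | H' ⊆ L ∧ NbdH L H' ⊆ H}

theorem ext_subset_nbd (L : Set (Finset V)) (hfin : L.Finite) (hL : IsComplex L)
    (H : Set (Finset V)) (hH : H ⊆ L) :
    ExtOp L H ⊆ NbdH L H ∧
      ((∀ σ ∈ H, ∀ v ∈ σ, ({v} : Finset V) ∈ H) → ExtOp L H = NbdH L H) := by
  have hsub : ExtOp L H ⊆ NbdH L H := by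
    rintro σ ⟨hσL, τ, ⟨hτL, hτn⟩, hστ⟩
    simp only [dDown, Set.mem_setOf_eq, not_and, not_forall] at hτn
    obtain ⟨ρ, hρτ, hρne, hρH⟩ := hτn hτL
    have hρL : ρ ∈ L := hL.2 τ hτL ρ hρτ hρne
    have hρH' : ρ ∈ H := by
      by_contra h
      exact hρH ⟨hρL, h⟩
    refine Set.mem_biUnion hρH' ⟨hσL, τ, ⟨hτL, ?_⟩, hστ⟩
    obtain ⟨v, hv⟩ := hρne
    exact ⟨v, Finset.mem_inter.mpr ⟨hρτ hv, hv⟩⟩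
  refine ⟨hsub, fun hvert => Set.Subset.antisymm hsub ?_⟩
  intro σ hσ
  simp only [NbdH, Set.mem_iUnion] at hσ
  obtain ⟨τ, hτH, hσL, σ', ⟨hσ'L, v, hv⟩, hσσ'⟩ := hσ
  rw [Finset.mem_inter] at hv
  have hvH : ({v} : Finset V) ∈ H := hvert τ hτH v hv.2
  refine ⟨hσL, σ', ⟨hσ'L, ?_⟩, hσσ'⟩
  intro hmem
  exact (hmem.2 {v} (Finset.singleton_subset_iff.mpr hv.1) ⟨v, Finset.mem_singleton_self v⟩).2 hvH
end
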